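/- For every real α with 1 < α ≤ 2 and every integer M ≥ 2, one has M₁(α) > 0 and the matrix A is symmetric positive definite; more precisely, M₁(α)·‖x‖² ≤ xᵀAx ≤ ‖x‖² for every x ∈ ℝ^{M−1} (equivalently, every eigenvalue of A lies in the interval [M₁(α), 1]). -/

import Mathlib

open Matrix

/-- `ϱ₂ = (3α³−19α²+36α−16)/(24α)`. -/
noncomputable def rho2 (α : ℝ) : ℝ := (3 * α ^ 3 - 19 * α ^ 2 + 36 * α - 16) / (24 * α)

/-- `M₁(α) = (−3α³+19α²−30α+16)/(6α)`. -/
noncomputable def M1 (α : ℝ) : ℝ := (-3 * α ^ 3 + 19 * α ^ 2 - 30 * α + 16) / (6 * α)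

/-- The `(M−1)×(M−1)` tridiagonal matrix with diagonal `1−2ϱ₂` and off-diagonal `ϱ₂`. -/
noncomputable def matA (α : ℝ) (M : ℕ) : Matrix (Fin (M - 1)) (Fin (M - 1)) ℝ :=
  fun i j =>
    if (i : ℕ) = (j : ℕ) then 1 - 2 * rho2 α
    else if (i : ℕ) + 1 = (j : ℕ) ∨ (j : ℕ) + 1 = (i : ℕ) then rho2 α
    else 0

section Aux

/-- ℕ-indexed tridiagonal entry. -/
def aent (ρ : ℝ) (i j : ℕ) : ℝ :=
  if i = j then 1 - 2 * ρ else if i + 1 = j ∨ j + 1 = i then ρ else 0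

open Finset

lemma rho2_nonneg (α : ℝ) (h1 : 1 < α) (h2 : α ≤ 2) : 0 ≤ rho2 α := by
  unfold rho2
  apply div_nonneg _ (by linarith)
  nlinarith [mul_nonneg (mul_nonneg (by linarith : (0:ℝ) ≤ 2 - α)
    (by linarith : (0:ℝ) ≤ α - 1)) (by linarith : (0:ℝ) ≤ 10 - 3*α)]

lemma M1_pos (α : ℝ) (h1 : 1 < α) (h2 : α ≤ 2) : 0 < M1 α := by
  unfold M1
  apply div_pos _ (by linarith)
  nlinarith [sq_nonneg (α - 1), sq_nonneg (3*α - 4),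
    mul_pos (by linarith : (0:ℝ) < α - 1) (by linarith : (0:ℝ) < 3 - α), sq_nonneg (α - 2),
    mul_nonneg (mul_nonneg (by linarith : (0:ℝ) ≤ 2 - α) (by linarith : (0:ℝ) ≤ α - 1))
      (by linarith : (0:ℝ) ≤ α - 1)]

lemma M1_eq (α : ℝ) (h1 : 1 < α) : M1 α = 1 - 4 * rho2 α := by
  unfold M1 rho2
  have : α ≠ 0 := by linarith
  field_simp
  ring

lemma shift_sq (y : ℕ → ℝ) (n : ℕ) (hn : 1 ≤ n) :
    ∑ i ∈ range (n - 1), y (i + 1) ^ 2 ≤ ∑ i ∈ range n, y i ^ 2 := by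
  obtain ⟨k, rfl⟩ : ∃ k, n = k + 1 := ⟨n - 1, by omega⟩
  simp only [Nat.add_sub_cancel]
  rw [Finset.sum_range_succ' (fun i => y i ^ 2) k]
  nlinarith [sq_nonneg (y 0)]

lemma cross_bound (y : ℕ → ℝ) (n : ℕ) (hn : 1 ≤ n) :
    |∑ i ∈ range (n - 1), y i * y (i + 1)| ≤ ∑ i ∈ range n, y i ^ 2 := by
  have h1 : ∑ i ∈ range (n-1), y i ^ 2 ≤ ∑ i ∈ range n, y i ^ 2 := by
    apply Finset.sum_le_sum_of_subset_of_nonneg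
    · exact Finset.range_subset_range.mpr (by omega)
    · intro i _ _; positivity
  have h2 := shift_sq y n hn
  have hsplit : ∑ i ∈ range (n-1), (y i ^2 + y (i+1)^2)/2
      = (∑ i ∈ range (n-1), y i ^ 2 + ∑ i ∈ range (n-1), y (i+1) ^ 2)/2 := by
    rw [← Finset.sum_add_distrib, ← Finset.sum_div]
  rw [abs_le]
  constructor
  · have hterm : ∀ i ∈ range (n-1), -((y i ^2 + y (i+1)^2)/2) ≤ y i * y (i+1) := by
      intro i _; nlinarith [sq_nonneg (y i + y (i+1))]
    have hs := Finset.sum_le_sum hterm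
    rw [Finset.sum_neg_distrib, hsplit] at hs
    linarith
  · have hterm : ∀ i ∈ range (n-1), y i * y (i+1) ≤ (y i ^2 + y (i+1)^2)/2 := by
      intro i _; nlinarith [sq_nonneg (y i - y (i+1))]
    have hs := Finset.sum_le_sum hterm
    rw [hsplit] at hs
    linarith

lemma quad_form (ρ : ℝ) (y : ℕ → ℝ) (n : ℕ) :
    ∑ i ∈ range n, ∑ j ∈ range n, y i * aent ρ i j * y j
      = (1 - 2 * ρ) * ∑ i ∈ range n, y i ^ 2
        + 2 * ρ * ∑ i ∈ range (n - 1), y i * y (i + 1) := by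
  induction n with
  | zero => simp
  | succ m ih =>
    rw [Finset.sum_range_succ]
    have hrow : ∀ i ∈ range m, ∑ j ∈ range (m+1), y i * aent ρ i j * y j
        = (∑ j ∈ range m, y i * aent ρ i j * y j) + y i * aent ρ i m * y m := by
      intro i hi; rw [Finset.sum_range_succ]
    rw [Finset.sum_congr rfl hrow, Finset.sum_add_distrib, ih, Finset.sum_range_succ]
    have hlast : ∀ j ∈ range m, y m * aent ρ m j * y j
        = (if j + 1 = m then ρ * (y j * y m) else 0) := by
      intro j hj
      simp only [Finset.mem_range] at hj
      by_cases h : j + 1 = m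
      · rw [if_pos h]
        have : aent ρ m j = ρ := by
          unfold aent; rw [if_neg (by omega), if_pos (by omega)]
        rw [this]; ring
      · rw [if_neg h]
        have : aent ρ m j = 0 := by
          unfold aent; rw [if_neg (by omega), if_neg (by omega)]
        rw [this]; ring
    have hcol : ∀ i ∈ range m, y i * aent ρ i m * y m
        = (if i + 1 = m then ρ * (y i * y m) else 0) := by
      intro i hi
      simp only [Finset.mem_range] at hi
      by_cases h : i + 1 = m
      · rw [if_pos h]
        have : aent ρ i m = ρ := by
          unfold aent; rw [if_neg (by omega), if_pos (by omega)]
        rw [this]; ring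
      · rw [if_neg h]
        have : aent ρ i m = 0 := by
          unfold aent; rw [if_neg (by omega), if_neg (by omega)]
        rw [this]; ring
    rw [Finset.sum_congr rfl hlast, Finset.sum_congr rfl hcol]
    have hamm : aent ρ m m = 1 - 2 * ρ := by simp [aent]
    rw [hamm]
    rcases Nat.eq_zero_or_pos m with hm | hm
    · subst hm
      simp only [range_zero, Finset.sum_empty]
      rw [Finset.sum_range_succ]
      simp; ring
    · obtain ⟨k, rfl⟩ : ∃ k, m = k + 1 := ⟨m - 1, by omega⟩
      have hsum : ∑ j ∈ range (k+1), (if j + 1 = k + 1 then ρ * (y j * y (k+1)) else 0)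
          = ρ * (y k * y (k+1)) := by
        rw [Finset.sum_range_succ]
        have h0 : ∀ j ∈ range k, (if j + 1 = k + 1 then ρ * (y j * y (k+1)) else 0) = 0 := by
          intro j hj; simp only [Finset.mem_range] at hj
          rw [if_neg (by omega)]
        rw [Finset.sum_congr rfl h0]; simp
      rw [hsum]
      have e1 : (k + 1 + 1 - 1) = k + 1 := by omega
      have e2 : (k + 1 - 1) = k := by omega
      rw [e1, e2,
        Finset.sum_range_succ (fun x => y x ^ 2) (k+1),
        Finset.sum_range_succ (fun x => y x * y (x+1)) k]
      ring

end Aux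

open Finset in
/-- For `1 < α ≤ 2` and `M ≥ 2`: `M₁(α) > 0`, `A` is symmetric, and
`M₁(α)‖x‖² ≤ xᵀAx ≤ ‖x‖²` for every real vector `x`; in particular `A` is
symmetric positive definite. -/
theorem matA_posDef (α : ℝ) (h1 : 1 < α) (h2 : α ≤ 2) (M : ℕ) (hM : 2 ≤ M) :
    0 < M1 α ∧ (matA α M).IsSymm ∧
    ∀ x : Fin (M - 1) → ℝ,
      M1 α * (∑ j, x j ^ 2) ≤ dotProduct x ((matA α M).mulVec x) ∧
      dotProduct x ((matA α M).mulVec x) ≤ ∑ j, x j ^ 2 := by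
  have hρ := rho2_nonneg α h1 h2
  refine ⟨M1_pos α h1 h2, ?_, ?_⟩
  · ext i j
    show matA α M j i = matA α M i j
    unfold matA
    split_ifs <;> first | rfl | (exfalso; omega)
  · intro x
    have hn1 : 1 ≤ M - 1 := by omega
    set y : ℕ → ℝ := fun k => if h : k < M - 1 then x ⟨k, h⟩ else 0 with hy
    have hyval : ∀ i : Fin (M - 1), y (i : ℕ) = x i := by
      intro i; simp [hy, i.isLt]
    have step1 : ∀ i : Fin (M - 1), (matA α M).mulVec x i
        = ∑ j ∈ range (M - 1), aent (rho2 α) (i : ℕ) j * y j := by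
      intro i
      rw [← Fin.sum_univ_eq_sum_range (fun j => aent (rho2 α) (i : ℕ) j * y j) (M - 1)]
      show ∑ j, matA α M i j * x j = _
      apply Finset.sum_congr rfl
      intro j _
      show matA α M i j * x j = aent (rho2 α) (i : ℕ) (j : ℕ) * y (j : ℕ)
      rw [hyval j]
      rfl
    have hQ : dotProduct x ((matA α M).mulVec x)
        = ∑ i ∈ range (M - 1), ∑ j ∈ range (M - 1), y i * aent (rho2 α) i j * y j := by
      rw [← Fin.sum_univ_eq_sum_range
        (fun k => ∑ j ∈ range (M - 1), y k * aent (rho2 α) k j * y j) (M - 1)]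
      show ∑ i, x i * (matA α M).mulVec x i = _
      apply Finset.sum_congr rfl
      intro i _
      show x i * (matA α M).mulVec x i
          = ∑ j ∈ range (M - 1), y (i : ℕ) * aent (rho2 α) (i : ℕ) j * y j
      rw [step1 i, hyval i, Finset.mul_sum]
      apply Finset.sum_congr rfl
      intro j _
      ring
    have hE : ∑ j, x j ^ 2 = ∑ i ∈ range (M - 1), y i ^ 2 := by
      rw [← Fin.sum_univ_eq_sum_range (fun i => y i ^ 2) (M - 1)]
      apply Finset.sum_congr rfl
      intro i _
      show x i ^ 2 = y (i : ℕ) ^ 2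
      rw [hyval i]
    have hcross := cross_bound y (M - 1) hn1
    rw [abs_le] at hcross
    obtain ⟨hc1, hc2⟩ := hcross
    have hQform : dotProduct x ((matA α M).mulVec x)
        = (1 - 2 * rho2 α) * (∑ i ∈ range (M - 1), y i ^ 2)
          + 2 * rho2 α * (∑ i ∈ range (M - 1 - 1), y i * y (i + 1)) := by
      rw [hQ, quad_form]
    rw [hQform, hE, M1_eq α h1]
    constructor
    · nlinarith [mul_nonneg hρ (by linarith : (0:ℝ) ≤ (∑ i ∈ range (M - 1), y i ^ 2)
        + ∑ i ∈ range (M - 1 - 1), y i * y (i + 1))]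
    · nlinarith [mul_nonneg hρ (by linarith : (0:ℝ) ≤ (∑ i ∈ range (M - 1), y i ^ 2)
        - ∑ i ∈ range (M - 1 - 1), y i * y (i + 1))]
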